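/- arXiv:2101.02189 — 3 statements merged into one kernel-verified Lean document; each statement's English description precedes it below -/
import Mathlib

section
/- Let E be a field of characteristic 0, V a nonzero finite-dimensional E-vector space, and n ≥ 1. The kernel of the group homomorphism Sym^n : GL(V) → GL(Sym^n V), sending A to the induced automorphism of the n-th symmetric power, consists exactly of the scalar automorphisms λ·id_V with λ^n = 1. -/
open scoped TensorProduct
open PiTensorProduct

variable (E : Type*) [Field E] (V : Type*) [AddCommGroup V] [Module E V] (n : ℕ)

/-- The submodule of relations defining the `n`-th symmetric power of `V` as a quotient of the
`n`-th tensor power: it is spanned by the differences of pure tensors of permuted families. -/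
noncomputable def symRel : Submodule E (⨂[E] (i : Fin n), V) :=
  Submodule.span E {x | ∃ (v : Fin n → V) (σ : Equiv.Perm (Fin n)),
    x = PiTensorProduct.tprod E v - PiTensorProduct.tprod E (fun i => v (σ i))}

/-- The `n`-th symmetric power `Sym^n V`, as a quotient of the `n`-th tensor power. -/
noncomputable abbrev SymPow := (⨂[E] (i : Fin n), V) ⧸ symRel E V n

/-- The endomorphism of `Sym^n V` functorially induced by an endomorphism of `V`. -/
noncomputable def symMap (f : V →ₗ[E] V) : SymPow E V n →ₗ[E] SymPow E V n :=
  Submodule.mapQ _ _ (PiTensorProduct.map fun _ => f) (by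
    refine Submodule.span_le.2 ?_
    rintro x ⟨v, σ, rfl⟩
    refine Submodule.mem_comap.2 (Submodule.subset_span ?_)
    exact ⟨fun i => f (v i), σ, by simp [PiTensorProduct.map_tprod]⟩)

/-- Evaluation functional on `Sym^n V` induced by `v ↦ ∏ i, f (v i)` for `f ∈ V*`. -/
noncomputable def symEval (f : V →ₗ[E] E) : SymPow E V n →ₗ[E] E :=
  Submodule.liftQ _
    (PiTensorProduct.lift ((MultilinearMap.mkPiAlgebra E (Fin n) E).compLinearMap fun _ => f))
    (by
      refine Submodule.span_le.2 ?_
      rintro x ⟨v, σ, rfl⟩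
      have : (∏ i, f (v (σ i))) = ∏ i, f (v i) := Equiv.prod_comp σ fun i => f (v i)
      simp [LinearMap.mem_ker, this])

theorem symEval_mk (f : V →ₗ[E] E) (v : Fin n → V) :
    symEval E V n f (Submodule.Quotient.mk (PiTensorProduct.tprod E v)) = ∏ i, f (v i) := by
  exact (Submodule.liftQ_apply _ _ _).trans (by simp)

theorem symMap_mk (g : V →ₗ[E] V) (v : Fin n → V) :
    symMap E V n g (Submodule.Quotient.mk (PiTensorProduct.tprod E v)) =
      Submodule.Quotient.mk (PiTensorProduct.tprod E fun i => g (v i)) := by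
  exact (Submodule.mapQ_apply _ _ _ _).trans (by simp [PiTensorProduct.map_tprod])

/-- Over a field of characteristic zero, the kernel of `GL(V) → GL(Sym^n V)` consists exactly of
the scalar automorphisms `λ • id` with `λ ^ n = 1`. -/
theorem statement2 (hn : 1 ≤ n) [Nontrivial V] [FiniteDimensional E V] [CharZero E]
    (A : V ≃ₗ[E] V) :
    symMap E V n A.toLinearMap = LinearMap.id ↔
      ∃ lam : E, lam ^ n = 1 ∧ A.toLinearMap = (lam • LinearMap.id : V →ₗ[E] V) := by
  have hn0 : n ≠ 0 := by omega
  constructor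
  · intro h
    -- key identity
    have key : ∀ (f : V →ₗ[E] E) (x : V), (f (A x)) ^ n = (f x) ^ n := by
      intro f x
      have h1 : symMap E V n A.toLinearMap
          (Submodule.Quotient.mk (PiTensorProduct.tprod E fun _ : Fin n => x)) =
          Submodule.Quotient.mk (PiTensorProduct.tprod E fun _ : Fin n => x) := by
        rw [h]; rfl
      rw [symMap_mk] at h1
      have h2 := congrArg (symEval E V n f) h1
      rw [symEval_mk, symEval_mk] at h2
      simpa [Finset.prod_const] using h2
    -- every vector is an eigenvector
    have eig : ∀ x : V, A x ∈ Submodule.span E {x} := by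
      intro x
      by_contra hx
      set p := Submodule.span E {x} with hp
      have hne : Submodule.Quotient.mk (p := p) (A x) ≠ 0 := by
        simpa [Submodule.Quotient.mk_eq_zero] using hx
      obtain ⟨g, hg⟩ := not_forall.1 (fun hall =>
        hne ((Module.forall_dual_apply_eq_zero_iff E _).1 hall))
      set f : V →ₗ[E] E := g ∘ₗ p.mkQ with hf
      have hfx : f x = 0 := by
        simp [hf, Submodule.mkQ_apply, (Submodule.Quotient.mk_eq_zero p).2
          (Submodule.mem_span_singleton_self x)]
      have := key f x
      rw [hfx, zero_pow hn0] at this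
      exact hg (by
        have : f (A x) = 0 := pow_eq_zero_iff hn0 |>.1 this
        simpa [hf] using this)
    -- deduce A is scalar
    obtain ⟨x0, hx0⟩ := exists_ne (0 : V)
    obtain ⟨c0, hc0⟩ := Submodule.mem_span_singleton.1 (eig x0)
    have hscal : ∀ y : V, A y = c0 • y := by
      intro y
      by_cases hy : y ∈ Submodule.span E {x0}
      · obtain ⟨a, rfl⟩ := Submodule.mem_span_singleton.1 hy
        rw [map_smul, ← hc0, smul_comm]
      · obtain ⟨c, hc⟩ := Submodule.mem_span_singleton.1 (eig y)
        obtain ⟨d, hd⟩ := Submodule.mem_span_singleton.1 (eig (x0 + y))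
        have hsum : d • x0 + d • y = c0 • x0 + c • y := by
          rw [← smul_add, hd, map_add, ← hc0, ← hc]
        have h1 : (d - c0) • x0 = (c - d) • y := by
          rw [sub_smul, sub_smul]
          rw [sub_eq_sub_iff_add_eq_add]
          linear_combination (norm := module) hsum
        have hcd : c = d := by
          by_contra hne
          apply hy
          refine Submodule.mem_span_singleton.2 ⟨(c - d)⁻¹ * (d - c0), ?_⟩
          rw [mul_smul, h1, inv_smul_smul₀ (sub_ne_zero.2 hne)]
        have hdc0 : d = c0 := by
          have : (d - c0) • x0 = 0 := by rw [h1, hcd, sub_self, zero_smul]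
          have := (smul_eq_zero.1 this).resolve_right hx0
          have := sub_eq_zero.1 this
          exact this
        rw [← hc, hcd, hdc0]
    -- lam^n = 1
    obtain ⟨f, hf⟩ := not_forall.1 (fun hall =>
      hx0 ((Module.forall_dual_apply_eq_zero_iff E _).1 hall))
    have hk := key f x0
    rw [hscal x0, map_smul, smul_eq_mul, mul_pow] at hk
    have hc0n : c0 ^ n = 1 :=
      mul_right_cancel₀ (pow_ne_zero n hf) (by rw [hk, one_mul])
    exact ⟨c0, hc0n, LinearMap.ext fun y => by simpa using hscal y⟩
  · rintro ⟨lam, hl, hA⟩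
    refine Submodule.linearMap_qext _ ?_
    refine PiTensorProduct.ext (MultilinearMap.ext fun v => ?_)
    have h1 : (symMap E V n A.toLinearMap).comp (symRel E V n).mkQ
        (PiTensorProduct.tprod E v) =
        Submodule.Quotient.mk (PiTensorProduct.tprod E fun i => A (v i)) := by
      simp only [LinearMap.comp_apply, Submodule.mkQ_apply]
      exact symMap_mk E V n A.toLinearMap v
    have hAv : (fun i => A (v i)) = fun i => lam • v i := by
      funext i
      have := LinearMap.congr_fun hA (v i)
      simpa using this
    have h2 : (PiTensorProduct.tprod E fun i => A (v i)) =
        PiTensorProduct.tprod E v := by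
      rw [hAv]
      rw [show (fun i => lam • v i) = fun i => (fun _ : Fin n => lam) i • v i from rfl]
      rw [MultilinearMap.map_smul_univ]
      simp [Finset.prod_const, hl]
    simp only [LinearMap.compMultilinearMap_apply, h1, h2, LinearMap.comp_apply,
      Submodule.mkQ_apply, LinearMap.id_apply]
end

section
/- Let F be a field of characteristic 0, n ≥ 1, and A ∈ GL_2(F). Consider the induced automorphism Sym^n(A) of the (n+1)-dimensional space Sym^n(F²), written as a matrix in the basis (e₁^n, e₁^{n-1}e₂, …, e₂^n) where (e₁, e₂) is the standard basis of F². If the matrix of Sym^n(A) is upper triangular, then A is upper triangular. -/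
open Polynomial

/-- If the matrix of `Sym^n A` in the monomial basis `(e₁^n, e₁^{n-1}e₂, …, e₂^n)` of
`Sym^n(F²)` is upper triangular, then `A` is upper triangular. The `(j,i)` entry of `Sym^n A`
is the coefficient of `Y^j` in `(A₀₀ + A₁₀ Y)^{n-i} (A₀₁ + A₁₁ Y)^i`. -/
theorem statement7 {F : Type*} [Field F] [CharZero F] {n : ℕ} (hn : 1 ≤ n)
    (A : Matrix (Fin 2) (Fin 2) F) (hA : IsUnit A.det)
    (htri : ∀ i j : Fin (n + 1), (i : ℕ) < (j : ℕ) →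
      (((C (A 0 0) + C (A 1 0) * X) ^ (n - (i : ℕ)) *
        (C (A 0 1) + C (A 1 1) * X) ^ (i : ℕ) : F[X])).coeff (j : ℕ) = 0) :
    A 1 0 = 0 := by
  have h := htri ⟨0, by omega⟩ ⟨n, by omega⟩ (by exact hn)
  simp only [Nat.sub_zero, pow_zero, mul_one] at h
  have hdeg : (C (A 0 0) + C (A 1 0) * X : F[X]).natDegree ≤ 1 := by
    apply Polynomial.natDegree_add_le_of_degree_le
    · simp
    · exact (Polynomial.natDegree_C_mul_le _ _).trans (by simp)
  have := Polynomial.coeff_pow_of_natDegree_le hdeg (m := n)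
  rw [mul_one] at this
  rw [this] at h
  simp at h
  exact h.1
end

section
/- (Noether–Deuring) Let G be a finite group (or a group, with finite-dimensional representations), E a field, F/E a field extension, and V, W finite-dimensional E-linear representations of G. If F ⊗_E V and F ⊗_E W are isomorphic as F-linear representations of G, then V and W are isomorphic as E-linear representations of G. -/
open scoped TensorProduct

set_option linter.unusedSectionVars false
set_option maxHeartbeats 1000000

namespace ND

variable {E : Type*} [Field E] {G : Type*} [Group G]

section EqvHoms

variable {X Y : Type*} [AddCommGroup X] [Module E X] [AddCommGroup Y] [Module E Y]

/-- The subspace of equivariant linear maps. -/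
def eqvHoms (ξ : Representation E G X) (σ : Representation E G Y) :
    Submodule E (X →ₗ[E] Y) where
  carrier := {f | ∀ g x, f (ξ g x) = σ g (f x)}
  add_mem' := by
    intro a b ha hb g x
    simp [ha g x, hb g x]
  zero_mem' := by intro g x; simp
  smul_mem' := by
    intro c a ha g x
    simp [ha g x]

lemma mem_eqvHoms {ξ : Representation E G X} {σ : Representation E G Y} {f : X →ₗ[E] Y} :
    f ∈ eqvHoms ξ σ ↔ ∀ g x, f (ξ g x) = σ g (f x) := Iff.rfl

/-- The inverse of an equivariant equivalence is equivariant. -/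
lemma symm_mem_eqvHoms {ξ : Representation E G X} {σ : Representation E G Y} {e : X ≃ₗ[E] Y}
    (he : (e : X →ₗ[E] Y) ∈ eqvHoms ξ σ) : (e.symm : Y →ₗ[E] X) ∈ eqvHoms σ ξ := by
  rw [mem_eqvHoms] at he ⊢
  intro g y
  apply e.injective
  have h1 := he g (e.symm y)
  simp only [LinearEquiv.coe_coe, LinearEquiv.apply_symm_apply] at h1 ⊢
  exact h1.symm

/-- `eqvHoms` as an intersection of kernels. -/
def twist (ξ : Representation E G X) (σ : Representation E G Y) (g : G) :
    (X →ₗ[E] Y) →ₗ[E] (X →ₗ[E] Y) where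
  toFun f := σ g ∘ₗ f - f ∘ₗ ξ g
  map_add' a b := by
    ext x
    simp [add_comm, add_sub_add_comm]
  map_smul' c a := by
    ext x
    simp [smul_sub]

lemma eqvHoms_eq_iInf_ker (ξ : Representation E G X) (σ : Representation E G Y) :
    eqvHoms ξ σ = ⨅ g, LinearMap.ker (twist ξ σ g) := by
  ext f
  simp only [Submodule.mem_iInf, LinearMap.mem_ker, twist, LinearMap.coe_mk, AddHom.coe_mk,
    sub_eq_zero, mem_eqvHoms]
  constructor
  · intro h g
    ext x
    exact (h g x).symm
  · intro h g x
    exact (LinearMap.ext_iff.1 (h g) x).symm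

end EqvHoms

section BaseChangeSubmodule

variable (F : Type*) [Field F] [Algebra E F]
variable {M N : Type*} [AddCommGroup M] [Module E M] [AddCommGroup N] [Module E N]

lemma baseChange_mono {p q : Submodule E M} (h : p ≤ q) :
    p.baseChange F ≤ q.baseChange F := by
  rw [Submodule.baseChange_eq_span, Submodule.baseChange_eq_span]
  exact Submodule.span_mono (Set.image_mono h)

lemma tmul_one_mem_baseChange {p : Submodule E M} {m : M} (hm : m ∈ p) :
    (1 : F) ⊗ₜ[E] m ∈ p.baseChange F :=
  Submodule.tmul_mem_baseChange_of_mem 1 hm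

lemma map_baseChange (f : M →ₗ[E] N) (p : Submodule E M) :
    Submodule.map (f.baseChange F) (p.baseChange F) = (Submodule.map f p).baseChange F := by
  simp only [Submodule.baseChange_eq_span, Submodule.map_coe]
  rw [Submodule.map_span]
  congr 1
  ext x
  constructor
  · rintro ⟨y, ⟨m, hm, rfl⟩, rfl⟩
    exact ⟨f m, ⟨m, hm, rfl⟩, by simp⟩
  · rintro ⟨n, ⟨m, hm, rfl⟩, rfl⟩
    exact ⟨(1 : F) ⊗ₜ[E] m, ⟨m, hm, rfl⟩, by simp⟩

lemma range_baseChange (f : M →ₗ[E] N) :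
    LinearMap.range (f.baseChange F) = (LinearMap.range f).baseChange F := by
  rw [← Submodule.map_top, ← Submodule.map_top, ← Submodule.baseChange_top (A := F) (M := M),
    map_baseChange]

lemma injective_baseChange {f : M →ₗ[E] N} (hf : Function.Injective f) :
    Function.Injective (f.baseChange F) := by
  rw [show ⇑(f.baseChange F) = ⇑(LinearMap.lTensor F f) from LinearMap.baseChange_eq_ltensor f]
  exact Module.Flat.lTensor_preserves_injective_linearMap f hf

lemma finrank_baseChange_submodule [FiniteDimensional E M] (p : Submodule E M) :
    Module.finrank F (p.baseChange F) = Module.finrank E p := by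
  have hinj : Function.Injective (p.subtype.baseChange F) :=
    injective_baseChange F p.injective_subtype
  have hr : LinearMap.range (p.subtype.baseChange F) = p.baseChange F := by
    rw [range_baseChange, Submodule.range_subtype]
  calc Module.finrank F (p.baseChange F)
      = Module.finrank F (LinearMap.range (p.subtype.baseChange F)) := by rw [hr]
    _ = Module.finrank F (F ⊗[E] p) :=
        (LinearEquiv.finrank_eq (LinearEquiv.ofInjective _ hinj)).symm
    _ = Module.finrank E p := Module.finrank_baseChange

lemma ker_baseChange [FiniteDimensional E M] [FiniteDimensional E N] (f : M →ₗ[E] N) :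
    LinearMap.ker (f.baseChange F) = (LinearMap.ker f).baseChange F := by
  have le1 : (LinearMap.ker f).baseChange F ≤ LinearMap.ker (f.baseChange F) := by
    rw [Submodule.baseChange_eq_span, Submodule.span_le]
    rintro x ⟨m, hm, rfl⟩
    simp only [SetLike.mem_coe, LinearMap.mem_ker]
    have : f m = 0 := hm
    simp [TensorProduct.mk, this]
  refine (Submodule.eq_of_le_of_finrank_eq le1 ?_).symm
  have h1 := LinearMap.finrank_range_add_finrank_ker (f.baseChange F)
  have h2 := LinearMap.finrank_range_add_finrank_ker f
  rw [range_baseChange, finrank_baseChange_submodule, Module.finrank_baseChange] at h1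
  rw [finrank_baseChange_submodule]
  omega

lemma baseChange_sup (p q : Submodule E M) :
    (p ⊔ q).baseChange F = p.baseChange F ⊔ q.baseChange F := by
  have h : p ⊔ q = Submodule.span E ((p : Set M) ∪ (q : Set M)) := by
    rw [Submodule.span_union, Submodule.span_eq, Submodule.span_eq]
  rw [h, Submodule.baseChange_span, Set.image_union, Submodule.span_union]
  rw [Submodule.baseChange_eq_span, Submodule.baseChange_eq_span, Submodule.map_coe,
    Submodule.map_coe]

lemma baseChange_inf [FiniteDimensional E M] (p q : Submodule E M) :
    (p ⊓ q).baseChange F = p.baseChange F ⊓ q.baseChange F := by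
  have le1 : (p ⊓ q).baseChange F ≤ p.baseChange F ⊓ q.baseChange F :=
    le_inf (baseChange_mono F inf_le_left) (baseChange_mono F inf_le_right)
  refine (Submodule.eq_of_le_of_finrank_eq le1 ?_)
  have h1 := Submodule.finrank_sup_add_finrank_inf_eq (p.baseChange F) (q.baseChange F)
  have h2 := Submodule.finrank_sup_add_finrank_inf_eq p q
  rw [← baseChange_sup, finrank_baseChange_submodule, finrank_baseChange_submodule,
    finrank_baseChange_submodule] at h1
  rw [finrank_baseChange_submodule]
  omega

lemma exists_finset_iInf {G' : Type*} [FiniteDimensional E M] (p : G' → Submodule E M) :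
    ∃ s : Finset G', (⨅ g ∈ s, p g) = ⨅ g, p g := by
  classical
  set S : Set ℕ := {n | ∃ s : Finset G', Module.finrank E (⨅ g ∈ s, p g : Submodule E M) = n}
    with hS
  have hne : S.Nonempty := ⟨_, ∅, rfl⟩
  obtain ⟨s₀, hs₀⟩ : sInf S ∈ S := Nat.sInf_mem hne
  refine ⟨s₀, le_antisymm (le_iInf fun g => ?_) (le_iInf₂ fun g _ => iInf_le _ g)⟩
  · -- show ⨅ g ∈ s₀, p g ≤ p g
    have hsub : (⨅ x ∈ insert g s₀, p x) ≤ ⨅ x ∈ s₀, p x :=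
      le_iInf₂ fun x hx => iInf₂_le x (Finset.mem_insert_of_mem hx)
    have hfr : Module.finrank E (⨅ x ∈ insert g s₀, p x : Submodule E M)
        = Module.finrank E (⨅ x ∈ s₀, p x : Submodule E M) := by
      refine le_antisymm (Submodule.finrank_mono hsub) ?_
      rw [hs₀]
      exact Nat.sInf_le ⟨insert g s₀, rfl⟩
    have := Submodule.eq_of_le_of_finrank_eq hsub hfr
    calc (⨅ x ∈ s₀, p x) = ⨅ x ∈ insert g s₀, p x := this.symm
      _ ≤ p g := iInf₂_le g (Finset.mem_insert_self g s₀)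

lemma biInf_ker_baseChange [FiniteDimensional E M] [FiniteDimensional E N]
    {G' : Type*} (T : G' → (M →ₗ[E] N)) (s : Finset G') :
    (⨅ g ∈ s, LinearMap.ker (T g)).baseChange F
      = ⨅ g ∈ s, LinearMap.ker ((T g).baseChange F) := by
  classical
  induction s using Finset.induction_on with
  | empty => simp
  | insert _ _ hnotmem ih =>
      rw [Finset.iInf_insert, Finset.iInf_insert, baseChange_inf, ker_baseChange, ih]

lemma iInf_ker_baseChange [FiniteDimensional E M] [FiniteDimensional E N]
    {G' : Type*} (T : G' → (M →ₗ[E] N)) :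
    (⨅ g, LinearMap.ker (T g)).baseChange F
      = ⨅ g, LinearMap.ker ((T g).baseChange F) := by
  classical
  obtain ⟨s, hs⟩ := exists_finset_iInf (fun g => LinearMap.ker (T g))
  obtain ⟨s', hs'⟩ := exists_finset_iInf (fun g => LinearMap.ker ((T g).baseChange F))
  have key : ∀ (t : Finset G'), s ⊆ t →
      (⨅ g ∈ t, LinearMap.ker (T g)) = ⨅ g, LinearMap.ker (T g) := by
    intro t hts
    refine le_antisymm ?_ (le_iInf₂ fun g _ => iInf_le _ g)
    rw [← hs]
    exact le_iInf₂ fun g hg => iInf₂_le g (hts hg)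
  have key' : ∀ (t : Finset G'), s' ⊆ t →
      (⨅ g ∈ t, LinearMap.ker ((T g).baseChange F)) = ⨅ g, LinearMap.ker ((T g).baseChange F) := by
    intro t hts
    refine le_antisymm ?_ (le_iInf₂ fun g _ => iInf_le _ g)
    rw [← hs']
    exact le_iInf₂ fun g hg => iInf₂_le g (hts hg)
  rw [← key (s ∪ s') Finset.subset_union_left, ← key' (s ∪ s') Finset.subset_union_right,
    biInf_ker_baseChange]

end BaseChangeSubmodule

section Eta

variable (F : Type*) [Field F] [Algebra E F]
variable {X Y : Type*} [AddCommGroup X] [Module E X] [AddCommGroup Y] [Module E Y]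
variable [FiniteDimensional E X] [FiniteDimensional E Y]

lemma eta_tmul (c : F) (f : X →ₗ[E] Y) :
    LinearMap.tensorProduct E F X Y (c ⊗ₜ[E] f) = c • f.baseChange F := by
  simp [LinearMap.tensorProduct]

lemma eta_bijective : Function.Bijective (LinearMap.tensorProduct E F X Y) := by
  classical
  set b := Module.finBasis E X
  set Φ := (Algebra.TensorProduct.basis F b).constr F
    (M' := F ⊗[E] Y)
  set Ψ₁ := LinearEquiv.baseChange E F _ _ ((b.constr E (M' := Y)).symm)
  set Ψ₂ := TensorProduct.piRight E F F (fun _ : Fin (Module.finrank E X) => Y)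
  have key : ∀ t, LinearMap.tensorProduct E F X Y t = Φ (Ψ₂ (Ψ₁ t)) := by
    intro t
    induction t with
    | zero => simp
    | add a b iha ihb => simp only [map_add, iha, ihb]
    | tmul c f =>
        rw [eta_tmul]
        have h1 : Ψ₁ (c ⊗ₜ[E] f) = c ⊗ₜ[E] ((b.constr E (M' := Y)).symm f) := by
          simp [Ψ₁, LinearEquiv.baseChange]
        rw [h1]
        have h2 : Ψ₂ (c ⊗ₜ[E] ((b.constr E (M' := Y)).symm f))
            = fun i => c ⊗ₜ[E] ((b.constr E (M' := Y)).symm f i) := by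
          ext i
          simp [Ψ₂, TensorProduct.piRight]
        rw [h2]
        refine Module.Basis.ext (Algebra.TensorProduct.basis F b) fun j => ?_
        rw [Module.Basis.constr_basis]
        simp [Algebra.TensorProduct.basis_apply, Module.Basis.constr, TensorProduct.smul_tmul']
  have : ⇑(LinearMap.tensorProduct E F X Y)
      = ⇑(Ψ₁.trans (Ψ₂.trans Φ)) := by
    funext t
    simpa using key t
  rw [this]
  exact (Ψ₁.trans (Ψ₂.trans Φ)).bijective

/-- The base-change equivalence on hom spaces. -/
noncomputable def etaEquiv : F ⊗[E] (X →ₗ[E] Y) ≃ₗ[F] ((F ⊗[E] X) →ₗ[F] (F ⊗[E] Y)) :=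
  LinearEquiv.ofBijective _ (eta_bijective F)

lemma etaEquiv_tmul (c : F) (f : X →ₗ[E] Y) :
    etaEquiv F (c ⊗ₜ[E] f) = c • f.baseChange F := eta_tmul F c f

end Eta

section RepBaseChange

variable (F : Type*) [Field F] [Algebra E F]
variable {X Y : Type*} [AddCommGroup X] [Module E X] [AddCommGroup Y] [Module E Y]

/-- Base change of a representation. -/
noncomputable def bcRep (ξ : Representation E G X) : Representation F G (F ⊗[E] X) where
  toFun g := (ξ g).baseChange F
  map_one' := by
    ext x
    simp
  map_mul' g h := by
    ext x
    simp

@[simp] lemma bcRep_apply (ξ : Representation E G X) (g : G) :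
    bcRep F ξ g = (ξ g).baseChange F := rfl

variable [FiniteDimensional E X] [FiniteDimensional E Y]

lemma etaEquiv_twist (ξ : Representation E G X) (σ : Representation E G Y) (g : G) (t) :
    etaEquiv F ((twist ξ σ g).baseChange F t)
      = twist (bcRep F ξ) (bcRep F σ) g (etaEquiv F t) := by
  induction t with
  | zero => simp
  | add a b iha ihb => simp only [map_add, iha, ihb]
  | tmul c f =>
      rw [LinearMap.baseChange_tmul]
      show etaEquiv F (c ⊗ₜ[E] (σ g ∘ₗ f - f ∘ₗ ξ g))
        = ((σ g).baseChange F) ∘ₗ (etaEquiv F (c ⊗ₜ[E] f))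
          - (etaEquiv F (c ⊗ₜ[E] f)) ∘ₗ ((ξ g).baseChange F)
      rw [etaEquiv_tmul, etaEquiv_tmul, LinearMap.baseChange_sub, LinearMap.baseChange_comp,
        LinearMap.baseChange_comp, LinearMap.comp_smul, LinearMap.smul_comp]
      exact smul_sub c (((σ g).baseChange F) ∘ₗ f.baseChange F) ((f.baseChange F) ∘ₗ ((ξ g).baseChange F))

theorem baseChange_eqvHoms (ξ : Representation E G X) (σ : Representation E G Y) :
    (eqvHoms ξ σ).baseChange F
      = Submodule.comap (etaEquiv (E := E) F (X := X) (Y := Y)).toLinearMap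
          (eqvHoms (bcRep F ξ) (bcRep F σ)) := by
  rw [eqvHoms_eq_iInf_ker, iInf_ker_baseChange, eqvHoms_eq_iInf_ker, Submodule.comap_iInf]
  refine iInf_congr fun g => ?_
  ext t
  simp only [LinearMap.mem_ker, Submodule.mem_comap, LinearEquiv.coe_coe,
    LinearEquiv.coe_toLinearMap]
  constructor
  · intro h
    rw [← etaEquiv_twist, h, map_zero]
  · intro h
    apply (etaEquiv (E := E) F (X := X) (Y := Y)).injective
    rw [etaEquiv_twist, h, map_zero]

lemma finrank_eqvHoms_baseChange (ξ : Representation E G X) (σ : Representation E G Y) :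
    Module.finrank E (eqvHoms ξ σ)
      = Module.finrank F (eqvHoms (bcRep F ξ) (bcRep F σ)) := by
  rw [← finrank_baseChange_submodule F (eqvHoms ξ σ), baseChange_eqvHoms]
  exact LinearEquiv.finrank_eq (LinearEquiv.ofSubmodule' _ _)

lemma exists_preimage_eqvHom (ξ : Representation E G X) (σ : Representation E G Y)
    {φ : (F ⊗[E] X) →ₗ[F] (F ⊗[E] Y)} (hφ : φ ∈ eqvHoms (bcRep F ξ) (bcRep F σ)) :
    ∃ t ∈ (eqvHoms ξ σ).baseChange F, etaEquiv F t = φ := by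
  refine ⟨(etaEquiv F).symm φ, ?_, (etaEquiv F).apply_symm_apply φ⟩
  rw [baseChange_eqvHoms]
  simpa using hφ

end RepBaseChange

section InfiniteBranch

variable (F : Type*) [Field F] [Algebra E F]
variable {V W : Type*} [AddCommGroup V] [Module E V] [AddCommGroup W] [Module E W]
variable [FiniteDimensional E V] [FiniteDimensional E W]

lemma eval_det_aux {m n : ℕ} (A : Fin m → Matrix (Fin n) (Fin n) E)
    {K : Type*} [Field K] [Algebra E K] (c : Fin m → K) :
    MvPolynomial.aeval c
        (Matrix.of fun j k => ∑ i, MvPolynomial.X i * MvPolynomial.C (A i j k)).det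
      = (∑ i, c i • (A i).map (algebraMap E K)).det := by
  rw [AlgHom.map_det (MvPolynomial.aeval c)]
  congr 1
  ext j k
  simp only [AlgHom.mapMatrix_apply, Matrix.map_apply, Matrix.of_apply]
  rw [map_sum]
  rw [Matrix.sum_apply]
  congr 1
  ext i
  simp [Matrix.smul_apply, Algebra.smul_def]

open MvPolynomial in
theorem branch_infinite [Infinite E]
    (ρ : Representation E G V) (τ : Representation E G W)
    (hdim : Module.finrank E V = Module.finrank E W)
    (e : (F ⊗[E] V) ≃ₗ[F] F ⊗[E] W)
    (he : (e : (F ⊗[E] V) →ₗ[F] F ⊗[E] W) ∈ eqvHoms (bcRep F ρ) (bcRep F τ)) :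
    ∃ e' : V ≃ₗ[E] W, (e' : V →ₗ[E] W) ∈ eqvHoms ρ τ := by
  classical
  set n := Module.finrank E V with hn
  set bV : Module.Basis (Fin n) E V := Module.finBasis E V
  set bW : Module.Basis (Fin n) E W := (Module.finBasis E W).reindex (finCongr hdim.symm)
  set H := eqvHoms ρ τ with hH
  set m := Module.finrank E ↥H
  set fb : Module.Basis (Fin m) E ↥H := Module.finBasis E ↥H
  set A : Fin m → Matrix (Fin n) (Fin n) E :=
    fun i => LinearMap.toMatrix bV bW ((fb i : V →ₗ[E] W)) with hA
  set P : MvPolynomial (Fin m) E :=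
    (Matrix.of fun j k => ∑ i, MvPolynomial.X i * MvPolynomial.C (A i j k)).det with hP
  have EVAL : ∀ {K : Type u_3} [Field K] [Algebra E K], ∀ (c : Fin m → K),
      MvPolynomial.aeval c P = (∑ i, c i • (A i).map (algebraMap E K)).det := by
    intro K _ _ c
    rw [hP]
    exact eval_det_aux A c
  have EVALE : ∀ (c : Fin m → E),
      MvPolynomial.aeval c P = (∑ i, c i • (A i).map (algebraMap E E)).det := by
    intro c
    rw [hP]
    exact eval_det_aux A c
  -- the F-point coming from e
  obtain ⟨t, ht, hte⟩ := exists_preimage_eqvHom F ρ τ he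
  have hsp : Submodule.span E (Set.range (fun i => ((fb i : ↥H) : V →ₗ[E] W))) = H := by
    have : (fun i => ((fb i : ↥H) : V →ₗ[E] W)) = H.subtype ∘ fb := rfl
    rw [this, Set.range_comp, Submodule.span_image, fb.span_eq, Submodule.map_top,
      Submodule.range_subtype]
  rw [← hH] at ht
  have ht' : t ∈ Submodule.span F
      (Set.range (fun i => (1 : F) ⊗ₜ[E] ((fb i : ↥H) : V →ₗ[E] W))) := by
    rw [← hsp] at ht
    rw [Submodule.baseChange_span] at ht
    rwa [show ⇑(TensorProduct.mk E F (V →ₗ[E] W) 1) ''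
        Set.range (fun i => ((fb i : ↥H) : V →ₗ[E] W))
      = Set.range (fun i => (1 : F) ⊗ₜ[E] ((fb i : ↥H) : V →ₗ[E] W)) from by
        rw [← Set.range_comp]; rfl] at ht
  obtain ⟨c, hc⟩ := (Submodule.mem_span_range_iff_exists_fun F).1 ht'
  have he2 : (e : (F ⊗[E] V) →ₗ[F] F ⊗[E] W)
      = ∑ i, c i • ((fb i : V →ₗ[E] W)).baseChange F := by
    rw [← hte, ← hc, map_sum]
    congr 1
    ext i
    rw [map_smul, etaEquiv_tmul, one_smul]
  -- matrix of e
  set bVF := Algebra.TensorProduct.basis F bV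
  set bWF := Algebra.TensorProduct.basis F bW
  have hmat : LinearMap.toMatrix bVF bWF (e : (F ⊗[E] V) →ₗ[F] F ⊗[E] W)
      = ∑ i, c i • (A i).map (algebraMap E F) := by
    rw [he2, map_sum]
    congr 1
    ext i
    rw [map_smul, LinearMap.toMatrix_baseChange]
  have hunit : IsUnit (LinearMap.toMatrix bVF bWF
      (e : (F ⊗[E] V) →ₗ[F] F ⊗[E] W)).det := by
    have hcomp : (e : (F ⊗[E] V) →ₗ[F] F ⊗[E] W) ∘ₗ
        (e.symm : (F ⊗[E] W) →ₗ[F] F ⊗[E] V) = LinearMap.id := by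
      ext x
      simp
    have := LinearMap.toMatrix_comp bWF bVF bWF
      (e : (F ⊗[E] V) →ₗ[F] F ⊗[E] W) (e.symm : (F ⊗[E] W) →ₗ[F] F ⊗[E] V)
    rw [hcomp, LinearMap.toMatrix_id] at this
    apply IsUnit.of_mul_eq_one ((LinearMap.toMatrix bWF bVF
      (e.symm : (F ⊗[E] W) →ₗ[F] F ⊗[E] V)).det)
    rw [← Matrix.det_mul, ← this, Matrix.det_one]
  have hPne : P ≠ 0 := by
    intro h0
    have := EVAL c
    rw [h0, map_zero, ← hmat] at this
    exact hunit.ne_zero this.symm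
  -- find an E-point
  have hex : ∃ a : Fin m → E, MvPolynomial.eval a P ≠ 0 := by
    by_contra hall
    push_neg at hall
    exact hPne (MvPolynomial.funext fun x => by rw [hall x, map_zero])
  obtain ⟨a, ha⟩ := hex
  set f₀ : V →ₗ[E] W := ∑ i, a i • ((fb i : ↥H) : V →ₗ[E] W) with hf₀
  have hf₀H : f₀ ∈ H :=
    Submodule.sum_mem _ fun i _ => Submodule.smul_mem _ _ (SetLike.coe_mem (fb i))
  have hdet : (LinearMap.toMatrix bV bW f₀).det = MvPolynomial.eval a P := by
    have h1 : MvPolynomial.aeval a P = (∑ i, a i • (A i).map (algebraMap E E)).det := EVALE a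
    have h2 : MvPolynomial.aeval (R := E) a P = MvPolynomial.eval a P := by
      rw [MvPolynomial.aeval_def, MvPolynomial.eval, Algebra.algebraMap_self]
      rfl
    rw [← h2, h1]
    have hAm : ∀ i, (A i).map (algebraMap E E) = A i := by
      intro i
      have : ⇑(algebraMap E E) = id := by
        rw [Algebra.algebraMap_self]
        rfl
      rw [this, Matrix.map_id]
    simp only [hAm]
    congr 1
    rw [hf₀, map_sum]
    simp only [map_smul]
    rfl
  have hu : IsUnit (LinearMap.toMatrix bV bW f₀).det := by
    rw [hdet]
    exact isUnit_iff_ne_zero.2 ha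
  exact ⟨LinearEquiv.ofIsUnitDet hu, by rwa [LinearEquiv.coe_ofIsUnitDet hu]⟩

end InfiniteBranch

section FiniteBranch

variable {X Y X' Y' : Type*} [AddCommGroup X] [Module E X] [AddCommGroup Y] [Module E Y]
  [AddCommGroup X'] [Module E X'] [AddCommGroup Y'] [Module E Y']

/-- A submodule is invariant under a representation. -/
def IsInvariant (ξ : Representation E G X) (U : Submodule E X) : Prop :=
  ∀ g, ∀ x ∈ U, ξ g x ∈ U

/-- Restriction of a representation to an invariant submodule. -/
def subRep (ξ : Representation E G X) {U : Submodule E X} (hU : IsInvariant ξ U) :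
    Representation E G ↥U where
  toFun g := (ξ g).restrict (hU g)
  map_one' := by
    ext x
    simp [LinearMap.restrict_apply]
  map_mul' g h := by
    ext x
    simp [LinearMap.restrict_apply]

@[simp] lemma subRep_apply (ξ : Representation E G X) {U : Submodule E X}
    (hU : IsInvariant ξ U) (g : G) (x : ↥U) :
    ((subRep ξ hU g x : ↥U) : X) = ξ g (x : X) := rfl

/-- The (sub)type of invariant submodules. -/
def invSub (ξ : Representation E G X) : Type _ := {U : Submodule E X // IsInvariant ξ U}

/-- Equivariant isomorphism of representations. -/
def isoRep (ξ : Representation E G X) (σ : Representation E G Y) : Prop :=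
  ∃ e : X ≃ₗ[E] Y, (e : X →ₗ[E] Y) ∈ eqvHoms ξ σ

lemma isoRep_refl (ξ : Representation E G X) : isoRep ξ ξ :=
  ⟨LinearEquiv.refl E X, by rw [mem_eqvHoms]; intro g x; rfl⟩

lemma isoRep_symm {ξ : Representation E G X} {σ : Representation E G Y}
    (h : isoRep ξ σ) : isoRep σ ξ := by
  obtain ⟨e, he⟩ := h
  exact ⟨e.symm, symm_mem_eqvHoms he⟩

lemma isoRep_trans {ξ : Representation E G X} {σ : Representation E G Y}
    {ψ : Representation E G X'} (h1 : isoRep ξ σ) (h2 : isoRep σ ψ) : isoRep ξ ψ := by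
  obtain ⟨e1, he1⟩ := h1
  obtain ⟨e2, he2⟩ := h2
  refine ⟨e1.trans e2, ?_⟩
  rw [mem_eqvHoms] at he1 he2 ⊢
  intro g x
  simp only [LinearEquiv.coe_coe, LinearEquiv.trans_apply] at he1 he2 ⊢
  rw [he1, he2]

lemma isoRep_finrank {ξ : Representation E G X} {σ : Representation E G Y}
    (h : isoRep ξ σ) : Module.finrank E X = Module.finrank E Y := by
  obtain ⟨e, -⟩ := h
  exact e.finrank_eq

/-- Number of equivariant maps. -/
noncomputable def hcount (ξ : Representation E G X) (σ : Representation E G Y) : ℕ :=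
  Nat.card ↥(eqvHoms ξ σ)

/-- Number of surjective equivariant maps. -/
noncomputable def scount (ξ : Representation E G X) (σ : Representation E G Y) : ℕ :=
  Nat.card {f : X →ₗ[E] Y // f ∈ eqvHoms ξ σ ∧ Function.Surjective f}

lemma scount_congr {ξ : Representation E G X} {ξ' : Representation E G X'}
    {σ : Representation E G Y} {σ' : Representation E G Y'}
    (h1 : isoRep ξ ξ') (h2 : isoRep σ σ') : scount ξ σ = scount ξ' σ' := by
  obtain ⟨e1, he1⟩ := h1
  obtain ⟨e2, he2⟩ := h2
  have he1s := symm_mem_eqvHoms he1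
  have he2s := symm_mem_eqvHoms he2
  rw [mem_eqvHoms] at he1 he2 he1s he2s
  refine Nat.card_congr ⟨fun f => ⟨e2.toLinearMap ∘ₗ f.1 ∘ₗ e1.symm.toLinearMap, ?_, ?_⟩,
    fun f => ⟨e2.symm.toLinearMap ∘ₗ f.1 ∘ₗ e1.toLinearMap, ?_, ?_⟩, ?_, ?_⟩
  · rw [mem_eqvHoms]
    intro g x
    obtain ⟨f, hf, hs⟩ := f
    rw [mem_eqvHoms] at hf
    simp only [LinearMap.comp_apply, LinearEquiv.coe_coe, LinearEquiv.coe_toLinearMap] at *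
    rw [he1s g x, hf g _, he2 g _]
  · obtain ⟨f, hf, hs⟩ := f
    exact e2.surjective.comp (hs.comp e1.symm.surjective)
  · rw [mem_eqvHoms]
    intro g x
    obtain ⟨f, hf, hs⟩ := f
    rw [mem_eqvHoms] at hf
    simp only [LinearMap.comp_apply, LinearEquiv.coe_coe, LinearEquiv.coe_toLinearMap] at *
    rw [he1 g x, hf g _, he2s g _]
  · obtain ⟨f, hf, hs⟩ := f
    exact e2.symm.surjective.comp (hs.comp e1.surjective)
  · intro f
    ext x
    simp
  · intro f
    ext x
    simp

/-- Post-composition with an equivariant isomorphism, as a linear equivalence of hom spaces.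
Stated over a general field `K`. -/
def postCompEquiv {K : Type*} [Field K] {A B C : Type*} [AddCommGroup A] [Module K A]
    [AddCommGroup B] [Module K B] [AddCommGroup C] [Module K C]
    {σ : Representation K G B} {σ' : Representation K G C}
    (ξ : Representation K G A) (e : B ≃ₗ[K] C) (he : (e : B →ₗ[K] C) ∈ eqvHoms σ σ') :
    ↥(eqvHoms ξ σ) ≃ₗ[K] ↥(eqvHoms ξ σ') where
  toFun f := ⟨e.toLinearMap ∘ₗ f.1, by
    rw [mem_eqvHoms] at he ⊢
    intro g x
    have hf := f.2
    rw [mem_eqvHoms] at hf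
    simp only [LinearMap.comp_apply, LinearEquiv.coe_coe, LinearEquiv.coe_toLinearMap] at *
    rw [hf g x, he g _]⟩
  map_add' f1 f2 := by
    apply Subtype.ext
    ext x
    simp
  map_smul' c f := by
    apply Subtype.ext
    ext x
    simp
  invFun f := ⟨e.symm.toLinearMap ∘ₗ f.1, by
    have hes := symm_mem_eqvHoms he
    rw [mem_eqvHoms] at hes ⊢
    intro g x
    have hf := f.2
    rw [mem_eqvHoms] at hf
    simp only [LinearMap.comp_apply, LinearEquiv.coe_coe, LinearEquiv.coe_toLinearMap] at *
    rw [hf g x, hes g _]⟩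
  left_inv f := by
    apply Subtype.ext
    ext x
    simp
  right_inv f := by
    apply Subtype.ext
    ext x
    simp

section Counting

variable {X Y : Type*} [AddCommGroup X] [Module E X] [AddCommGroup Y] [Module E Y]
variable [FiniteDimensional E X] [FiniteDimensional E Y]

lemma finite_submodule [Finite E] : Finite (Submodule E X) := by
  have : Finite X := Module.finite_of_finite E
  exact Finite.of_injective (fun U => (U : Set X)) SetLike.coe_injective

instance finite_invSub [Finite E] (ξ : Representation E G X) : Finite (invSub ξ) := by
  have := finite_submodule (E := E) (X := X)
  exact Subtype.finite

instance finite_homs [Finite E] : Finite (X →ₗ[E] Y) := Module.finite_of_finite E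

lemma range_isInvariant {ξ : Representation E G X} {σ : Representation E G Y}
    {f : X →ₗ[E] Y} (hf : f ∈ eqvHoms ξ σ) : IsInvariant σ (LinearMap.range f) := by
  rw [mem_eqvHoms] at hf
  rintro g y ⟨x, rfl⟩
  exact ⟨ξ g x, (hf g x).symm ▸ rfl⟩

/-- The partition of equivariant homs according to their range. -/
lemma hcount_eq_sum [Finite E] (ξ : Representation E G X) (σ : Representation E G Y)
    [Fintype (invSub σ)] :
    hcount ξ σ = ∑ U : invSub σ, scount ξ (subRep σ U.2) := by
  classical
  letI : ∀ U : invSub σ, Fintype {f : X →ₗ[E] ↥U.1 // f ∈ eqvHoms ξ (subRep σ U.2)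
    ∧ Function.Surjective f} := fun U => Fintype.ofFinite _
  -- bijection
  set T := Σ U : invSub σ, {f : X →ₗ[E] ↥U.1 // f ∈ eqvHoms ξ (subRep σ U.2)
    ∧ Function.Surjective f} with hT
  have key : Nat.card ↥(eqvHoms ξ σ) = Nat.card T := by
    apply Nat.card_congr
    refine Equiv.symm (Equiv.ofBijective (fun p => ⟨p.1.1.subtype ∘ₗ p.2.1, ?_⟩) ⟨?_, ?_⟩)
    · -- membership
      rw [mem_eqvHoms]
      intro g x
      have hf := p.2.2.1
      rw [mem_eqvHoms] at hf
      simp only [LinearMap.comp_apply, Submodule.coe_subtype]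
      rw [hf g x]
      rfl
    · -- injective
      rintro ⟨⟨U, hU⟩, f, hf, hs⟩ ⟨⟨U', hU'⟩, f', hf', hs'⟩ hEq
      have hEq' : U.subtype ∘ₗ f = U'.subtype ∘ₗ f' := congrArg Subtype.val hEq
      have hUU' : U = U' := by
        have h1 : LinearMap.range (U.subtype ∘ₗ f) = U := by
          rw [LinearMap.range_comp, LinearMap.range_eq_top.2 hs, Submodule.map_top,
            Submodule.range_subtype]
        have h2 : LinearMap.range (U'.subtype ∘ₗ f') = U' := by
          rw [LinearMap.range_comp, LinearMap.range_eq_top.2 hs', Submodule.map_top,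
            Submodule.range_subtype]
        rw [← h1, ← h2, hEq']
      subst hUU'
      have hUinv : hU = hU' := rfl
      subst hUinv
      have hff' : f = f' := by
        ext x
        have := LinearMap.congr_fun hEq' x
        simpa using this
      subst hff'
      rfl
    · -- surjective
      rintro ⟨f, hf⟩
      refine ⟨⟨⟨LinearMap.range f, range_isInvariant hf⟩,
        ⟨f.rangeRestrict, ?_, f.surjective_rangeRestrict⟩⟩, ?_⟩
      · rw [mem_eqvHoms] at hf ⊢
        intro g x
        apply Subtype.ext
        simpa using hf g x
      · apply Subtype.ext
        ext x
        rfl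
  rw [hcount, key, hT, Nat.card_eq_fintype_card]
  rw [Fintype.card_sigma]
  congr 1
  ext U
  rw [scount, Nat.card_eq_fintype_card]

lemma scount_eq_zero_of_lt [Finite E] {ξ : Representation E G X} {σ : Representation E G Y}
    (h : Module.finrank E X < Module.finrank E Y) : scount ξ σ = 0 := by
  rw [scount, Nat.card_eq_zero]
  left
  constructor
  rintro ⟨f, -, hs⟩
  have := LinearMap.finrank_range_add_finrank_ker f
  rw [LinearMap.range_eq_top.2 hs, finrank_top] at this
  omega

lemma isoRep_of_scount_ne_zero [Finite E] {ξ : Representation E G X}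
    {σ : Representation E G Y}
    (h : scount ξ σ ≠ 0) (hrk : Module.finrank E X = Module.finrank E Y) : isoRep ξ σ := by
  rw [scount, Nat.card_ne_zero] at h
  obtain ⟨⟨f, hf, hs⟩⟩ := h.1
  have hker : LinearMap.ker f = ⊥ := by
    have h1 := LinearMap.finrank_range_add_finrank_ker f
    rw [LinearMap.range_eq_top.2 hs, finrank_top, hrk] at h1
    have : Module.finrank E ↥(LinearMap.ker f) = 0 := by omega
    exact Submodule.finrank_eq_zero.1 this
  exact ⟨LinearEquiv.ofBijective f ⟨LinearMap.ker_eq_bot.1 hker, hs⟩, hf⟩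

lemma scount_self_ne_zero [Finite E] (ξ : Representation E G X) : scount ξ ξ ≠ 0 := by
  rw [scount, Nat.card_ne_zero]
  refine ⟨⟨⟨LinearMap.id, ?_, Function.surjective_id⟩⟩, inferInstance⟩
  rw [mem_eqvHoms]
  intro g x
  rfl

end Counting

section Arith

/-- Grouping a sum over fibers of a map to a finite type. -/
lemma group_sum {α J : Type*} [Fintype α] [Fintype J] [DecidableEq J]
    (π : α → J) (g : J → ℕ) :
    ∑ x : α, g (π x) = ∑ j : J, (Nat.card {x : α // π x = j}) * g j := by
  classical
  rw [← Finset.sum_fiberwise Finset.univ π (fun x => g (π x))]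
  congr 1
  ext j
  rw [Finset.sum_congr rfl (fun x hx => by
    rw [(Finset.mem_filter.1 hx).2])]
  rw [Finset.sum_const, smul_eq_mul]
  congr 1
  rw [Nat.card_eq_fintype_card, Fintype.card_subtype]

/-- The key arithmetic cancellation argument. -/
lemma key_arith {J : Type*} [Fintype J] (a b rk : J → ℕ) (s : J → J → ℕ)
    (hid : ∀ j', ∑ j, a j * s j' j = ∑ j, b j * s j' j)
    (hzero : ∀ j' j, rk j' < rk j → s j' j = 0)
    (hdiag : ∀ j' j, s j' j ≠ 0 → rk j' = rk j → j = j')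
    (hpos : ∀ j, s j j ≠ 0) : a = b := by
  classical
  by_contra hab
  have hne : (Finset.univ.filter (fun j => a j ≠ b j)).Nonempty := by
    rw [Finset.filter_nonempty_iff]
    push_neg at hab
    obtain ⟨j, hj⟩ := Function.ne_iff.1 hab
    exact ⟨j, Finset.mem_univ j, hj⟩
  obtain ⟨jm, hmem, hmin⟩ := Finset.exists_min_image _ rk hne
  have hmem' := Finset.mem_filter.1 hmem
  have hterm : ∀ j, j ≠ jm → a j * s jm j = b j * s jm j := by
    intro j hj
    by_cases hab' : a j = b j
    · rw [hab']
    · have hjmem : j ∈ Finset.univ.filter (fun j => a j ≠ b j) :=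
        Finset.mem_filter.2 ⟨Finset.mem_univ j, hab'⟩
      have hrk := hmin j hjmem
      rcases lt_or_eq_of_le hrk with hlt | heq
      · rw [hzero jm j hlt, mul_zero, mul_zero]
      · by_cases hs : s jm j = 0
        · rw [hs, mul_zero, mul_zero]
        · exact absurd (hdiag jm j hs heq) hj
  have hsum := hid jm
  rw [← Finset.add_sum_erase _ _ (Finset.mem_univ jm),
    ← Finset.add_sum_erase _ (fun j => b j * s jm j) (Finset.mem_univ jm)] at hsum
  have hrest : ∑ j ∈ Finset.univ.erase jm, a j * s jm j
      = ∑ j ∈ Finset.univ.erase jm, b j * s jm j := by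
    refine Finset.sum_congr rfl fun j hj => hterm j (Finset.ne_of_mem_erase hj)
  rw [hrest] at hsum
  have : a jm * s jm jm = b jm * s jm jm := by omega
  exact hmem'.2 (Nat.eq_of_mul_eq_mul_right (Nat.pos_of_ne_zero (hpos jm)) this)

end Arith

section MainFinite

variable {V W : Type*} [AddCommGroup V] [Module E V] [AddCommGroup W] [Module E W]
variable [FiniteDimensional E V] [FiniteDimensional E W]
variable (ρ : Representation E G V) (τ : Representation E G W)

/-- The index type of invariant submodules on both sides. -/
def Ityp := invSub ρ ⊕ invSub τ

/-- Equivariant-isomorphism relation on `Ityp`. -/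
def rrel : Ityp ρ τ → Ityp ρ τ → Prop
  | .inl U, .inl U' => isoRep (subRep ρ U.2) (subRep ρ U'.2)
  | .inl U, .inr U' => isoRep (subRep ρ U.2) (subRep τ U'.2)
  | .inr U, .inl U' => isoRep (subRep τ U.2) (subRep ρ U'.2)
  | .inr U, .inr U' => isoRep (subRep τ U.2) (subRep τ U'.2)

lemma rrel_equivalence : Equivalence (rrel ρ τ) := by
  refine ⟨?_, ?_, ?_⟩
  · rintro (U | U) <;> exact isoRep_refl _
  · rintro (U | U) (U' | U') h <;> exact isoRep_symm h
  · rintro (U | U) (U' | U') (U'' | U'') h1 h2 <;> exact isoRep_trans h1 h2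

/-- The setoid. -/
def rsetoid : Setoid (Ityp ρ τ) := ⟨rrel ρ τ, rrel_equivalence ρ τ⟩

/-- Surjection counts on `Ityp`. -/
noncomputable def srepI : Ityp ρ τ → Ityp ρ τ → ℕ
  | .inl U, .inl U' => scount (subRep ρ U.2) (subRep ρ U'.2)
  | .inl U, .inr U' => scount (subRep ρ U.2) (subRep τ U'.2)
  | .inr U, .inl U' => scount (subRep τ U.2) (subRep ρ U'.2)
  | .inr U, .inr U' => scount (subRep τ U.2) (subRep τ U'.2)

/-- Ranks on `Ityp`. -/
noncomputable def rkI : Ityp ρ τ → ℕ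
  | .inl U => Module.finrank E ↥U.1
  | .inr U => Module.finrank E ↥U.1

lemma srepI_congr : ∀ i j i' j', rrel ρ τ i i' → rrel ρ τ j j' →
    srepI ρ τ i j = srepI ρ τ i' j' := by
  rintro (U | U) (U2 | U2) (U3 | U3) (U4 | U4) h1 h2 <;>
    exact scount_congr h1 h2

lemma rkI_congr : ∀ i i', rrel ρ τ i i' → rkI ρ τ i = rkI ρ τ i' := by
  rintro (U | U) (U2 | U2) h <;> exact isoRep_finrank h

theorem branch_finite [Finite E]
    (hdim : Module.finrank E V = Module.finrank E W)
    (HV : ∀ U : invSub ρ, hcount (subRep ρ U.2) ρ = hcount (subRep ρ U.2) τ)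
    (HW : ∀ U : invSub τ, hcount (subRep τ U.2) ρ = hcount (subRep τ U.2) τ) :
    ∃ e : V ≃ₗ[E] W, (e : V →ₗ[E] W) ∈ eqvHoms ρ τ := by
  classical
  letI S := rsetoid ρ τ
  letI : Finite (Ityp ρ τ) := by
    unfold Ityp
    infer_instance
  letI : Fintype (Ityp ρ τ) := Fintype.ofFinite _
  set J := Quotient S with hJ
  letI : Fintype J := Fintype.ofFinite _
  letI : DecidableEq J := Classical.decEq _
  letI : Fintype (invSub ρ) := Fintype.ofFinite _
  letI : Fintype (invSub τ) := Fintype.ofFinite _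
  set π : Ityp ρ τ → J := fun i => Quotient.mk S i with hπ
  set a : J → ℕ := fun j => Nat.card {U : invSub ρ // π (Sum.inl U) = j} with ha
  set b : J → ℕ := fun j => Nat.card {U : invSub τ // π (Sum.inr U) = j} with hb
  set sbar : J → J → ℕ := Quotient.lift₂ (srepI ρ τ) (fun i j i2 j2 h1 h2 =>
    srepI_congr ρ τ i j i2 j2 h1 h2) with hsbar
  set rkJ : J → ℕ := Quotient.lift (rkI ρ τ) (fun i i' h => rkI_congr ρ τ i i' h) with hrkJ
  have hid : ∀ j', ∑ j, a j * sbar j' j = ∑ j, b j * sbar j' j := by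
    refine Quotient.ind fun i => ?_
    have hgA : ∑ U : invSub ρ, sbar (π i) (π (Sum.inl U))
        = ∑ j, a j * sbar (π i) j := by
      rw [group_sum (fun U : invSub ρ => π (Sum.inl U)) (sbar (π i))]
    have hgB : ∑ U : invSub τ, sbar (π i) (π (Sum.inr U))
        = ∑ j, b j * sbar (π i) j := by
      rw [group_sum (fun U : invSub τ => π (Sum.inr U)) (sbar (π i))]
    have hmid : ∑ U : invSub ρ, sbar (π i) (π (Sum.inl U))
        = ∑ U : invSub τ, sbar (π i) (π (Sum.inr U)) := by
      obtain (U0 | U0) := i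
      · calc ∑ U : invSub ρ, sbar (π (Sum.inl U0)) (π (Sum.inl U))
            = ∑ U : invSub ρ, scount (subRep ρ U0.2) (subRep ρ U.2) :=
              Finset.sum_congr rfl fun U _ => rfl
          _ = hcount (subRep ρ U0.2) ρ := (hcount_eq_sum _ _).symm
          _ = hcount (subRep ρ U0.2) τ := HV U0
          _ = ∑ U : invSub τ, scount (subRep ρ U0.2) (subRep τ U.2) := hcount_eq_sum _ _
          _ = ∑ U : invSub τ, sbar (π (Sum.inl U0)) (π (Sum.inr U)) :=
              Finset.sum_congr rfl fun U _ => rfl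
      · calc ∑ U : invSub ρ, sbar (π (Sum.inr U0)) (π (Sum.inl U))
            = ∑ U : invSub ρ, scount (subRep τ U0.2) (subRep ρ U.2) :=
              Finset.sum_congr rfl fun U _ => rfl
          _ = hcount (subRep τ U0.2) ρ := (hcount_eq_sum _ _).symm
          _ = hcount (subRep τ U0.2) τ := HW U0
          _ = ∑ U : invSub τ, scount (subRep τ U0.2) (subRep τ U.2) := hcount_eq_sum _ _
          _ = ∑ U : invSub τ, sbar (π (Sum.inr U0)) (π (Sum.inr U)) :=
              Finset.sum_congr rfl fun U _ => rfl
    rw [← hgA, hmid, hgB]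
  have hzero : ∀ j' j, rkJ j' < rkJ j → sbar j' j = 0 := by
    refine Quotient.ind fun i => Quotient.ind fun i' h => ?_
    obtain (U | U) := i <;> obtain (U2 | U2) := i' <;>
      exact scount_eq_zero_of_lt h
  have hdiag : ∀ j' j, sbar j' j ≠ 0 → rkJ j' = rkJ j → j = j' := by
    refine Quotient.ind fun i => Quotient.ind fun i' hs hrk => ?_
    refine (Quotient.sound ?_).symm
    obtain (U | U) := i <;> obtain (U2 | U2) := i' <;>
      exact isoRep_of_scount_ne_zero hs hrk
  have hpos : ∀ j, sbar j j ≠ 0 := by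
    refine Quotient.ind fun i => ?_
    obtain (U | U) := i <;> exact scount_self_ne_zero _
  have hab : a = b := key_arith a b rkJ sbar hid hzero hdiag hpos
  have htopinv : IsInvariant ρ (⊤ : Submodule E V) := fun g x _ => trivial
  set jtop : J := π (Sum.inl ⟨⊤, htopinv⟩) with hjtop
  have hane : a jtop ≠ 0 := by
    rw [ha, Nat.card_ne_zero]
    exact ⟨⟨⟨⟨⊤, htopinv⟩, rfl⟩⟩, inferInstance⟩
  have hbne : b jtop ≠ 0 := by rw [← hab]; exact hane
  rw [hb, Nat.card_ne_zero] at hbne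
  obtain ⟨⟨U, hU⟩⟩ := hbne.1
  have hiso : isoRep (subRep τ U.2) (subRep ρ htopinv) := Quotient.exact hU
  have eTop : isoRep (subRep ρ htopinv) ρ := by
    refine ⟨Submodule.topEquiv, ?_⟩
    rw [mem_eqvHoms]
    intro g x
    rfl
  have hUtop : U.1 = ⊤ := by
    apply Submodule.eq_top_of_finrank_eq
    have h1 := isoRep_finrank hiso
    rw [finrank_top] at h1
    rw [h1, hdim]
  have eU : isoRep (subRep τ U.2) τ := by
    refine ⟨LinearEquiv.ofBijective U.1.subtype ⟨Submodule.injective_subtype U.1, ?_⟩, ?_⟩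
    · rw [← LinearMap.range_eq_top, Submodule.range_subtype, hUtop]
    · rw [mem_eqvHoms]
      intro g x
      rfl
  exact isoRep_trans (isoRep_trans (isoRep_symm eTop) (isoRep_symm hiso)) eU

end MainFinite


section Glue

variable (F : Type*) [Field F] [Algebra E F]
variable {V W X : Type*} [AddCommGroup V] [Module E V] [AddCommGroup W] [Module E W]
  [AddCommGroup X] [Module E X]
variable [FiniteDimensional E V] [FiniteDimensional E W] [FiniteDimensional E X]

lemma hcount_eq_of_baseChange (ρ : Representation E G V) (τ : Representation E G W)
    (e : (F ⊗[E] V) ≃ₗ[F] F ⊗[E] W)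
    (he : (e : (F ⊗[E] V) →ₗ[F] F ⊗[E] W) ∈ eqvHoms (bcRep F ρ) (bcRep F τ))
    (ξ : Representation E G X) :
    hcount ξ ρ = hcount ξ τ := by
  have hfr : Module.finrank E ↥(eqvHoms ξ ρ) = Module.finrank E ↥(eqvHoms ξ τ) := by
    rw [finrank_eqvHoms_baseChange F ξ ρ, finrank_eqvHoms_baseChange F ξ τ]
    exact LinearEquiv.finrank_eq (postCompEquiv (bcRep F ξ) e he)
  obtain ⟨le⟩ := FiniteDimensional.nonempty_linearEquiv_of_finrank_eq hfr
  exact Nat.card_congr le.toEquiv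

end Glue

end FiniteBranch

theorem noether_deuring {F : Type*} [Field F] [Algebra E F]
    {V W : Type*} [AddCommGroup V] [Module E V] [AddCommGroup W] [Module E W]
    [FiniteDimensional E V] [FiniteDimensional E W]
    (ρ : Representation E G V) (τ : Representation E G W)
    (e : (F ⊗[E] V) ≃ₗ[F] (F ⊗[E] W))
    (he : ∀ (g : G) (x : F ⊗[E] V), e ((ρ g).baseChange F x) = (τ g).baseChange F (e x)) :
    ∃ e' : V ≃ₗ[E] W, (e' : V →ₗ[E] W) ∈ eqvHoms ρ τ := by
  have hmem : (e : (F ⊗[E] V) →ₗ[F] F ⊗[E] W) ∈ eqvHoms (bcRep F ρ) (bcRep F τ) := by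
    rw [mem_eqvHoms]
    intro g x
    exact he g x
  have hdim : Module.finrank E V = Module.finrank E W := by
    have h1 : Module.finrank F (F ⊗[E] V) = Module.finrank F (F ⊗[E] W) := e.finrank_eq
    rwa [Module.finrank_baseChange, Module.finrank_baseChange] at h1
  rcases finite_or_infinite E with hfin | hinf
  · refine branch_finite ρ τ hdim ?_ ?_
    · intro U
      exact hcount_eq_of_baseChange F ρ τ e hmem (subRep ρ U.2)
    · intro U
      exact hcount_eq_of_baseChange F ρ τ e hmem (subRep τ U.2)
  · exact branch_infinite F ρ τ hdim e hmem

end ND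

/-- Noether–Deuring: if two finite-dimensional `E`-linear representations of `G` become
isomorphic after extending scalars to a field extension `F` of `E`, then they are already
isomorphic over `E`. -/
theorem statement13 {E F : Type*} [Field E] [Field F] [Algebra E F]
    {G : Type*} [Group G]
    {V W : Type*} [AddCommGroup V] [Module E V] [AddCommGroup W] [Module E W]
    [FiniteDimensional E V] [FiniteDimensional E W]
    (ρ : Representation E G V) (τ : Representation E G W)
    (h : ∃ e : (F ⊗[E] V) ≃ₗ[F] (F ⊗[E] W),
      ∀ (g : G) (x : F ⊗[E] V), e ((ρ g).baseChange F x) = (τ g).baseChange F (e x)) :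
    ∃ e : V ≃ₗ[E] W, ∀ (g : G) (v : V), e (ρ g v) = τ g (e v) := by
  obtain ⟨e, he⟩ := h
  obtain ⟨e', he'⟩ := ND.noether_deuring ρ τ e he
  exact ⟨e', fun g v => ND.mem_eqvHoms.1 he' g v⟩
end
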